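/- Let V be a finite type, E : V → V → Prop an edge relation, r : V a root vertex, and F a set of vertices. There exists an infinite walk w : ℕ → V with w 0 = r, E (w n) (w (n+1)) for all n, and {n | w n ∈ F} infinite, if and only if there exists a vertex v ∈ F such that v is reachable from r and there is a nonempty closed walk from v back to itself, i.e., there exists u with E v u and v reachable from u. -/

import Mathlib

private lemma walk_reach {V : Type*} {E : V → V → Prop} {w : ℕ → V}
    (hw : ∀ n, E (w n) (w (n + 1))) :
    ∀ a b, a ≤ b → Relation.ReflTransGen E (w a) (w b) := by
  intro a b hab
  induction b, hab using Nat.le_induction with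
  | base => exact Relation.ReflTransGen.refl
  | succ n hn ih => exact ih.tail (hw n)

private lemma exists_fun_of_reflTransGen {V : Type*} {E : V → V → Prop} {a b : V}
    (h : Relation.ReflTransGen E a b) :
    ∃ (k : ℕ) (f : ℕ → V), f 0 = a ∧ f k = b ∧ ∀ i < k, E (f i) (f (i + 1)) := by
  induction h with
  | refl => exact ⟨0, fun _ => a, rfl, rfl, fun i hi => absurd hi (by omega)⟩
  | @tail b c hab hbc ih =>
    obtain ⟨k, f, h0, hk, hstep⟩ := ih
    refine ⟨k + 1, fun i => if i ≤ k then f i else c, by simp [h0], by simp, ?_⟩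
    intro i hi
    rcases Nat.lt_or_ge i k with h | h
    · simp only [if_pos (Nat.le_of_lt h), if_pos (Nat.succ_le_of_lt h)]
      exact hstep i h
    · have hik : i = k := by omega
      subst hik
      simp only [le_refl, if_pos, if_neg (by omega : ¬ i + 1 ≤ i), hk]
      exact hbc

/-- existence of an infinite walk from root `r` hitting `F` infinitely
often is equivalent to existence of a vertex `v ∈ F` reachable from `r` that lies
on a nonempty closed walk. -/
theorem infinite_walk_hits_infinitely_iff {V : Type*} [Fintype V]
    (E : V → V → Prop) (r : V) (F : Set V) :
    (∃ w : ℕ → V, w 0 = r ∧ (∀ n, E (w n) (w (n + 1))) ∧ {n | w n ∈ F}.Infinite) ↔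
      ∃ v ∈ F, Relation.ReflTransGen E r v ∧
        ∃ u, E v u ∧ Relation.ReflTransGen E u v := by
  constructor
  · rintro ⟨w, h0, hw, hinf⟩
    -- pigeonhole: some vertex is hit infinitely often
    have hpig : ∃ v : V, {n | w n ∈ F ∧ w n = v}.Infinite := by
      by_contra h
      push_neg at h
      have hfin : {n | w n ∈ F}.Finite := by
        have hbu : (⋃ v ∈ (Set.univ : Set V), {n | w n ∈ F ∧ w n = v}).Finite :=
          Set.Finite.biUnion Set.finite_univ (fun v _ => h v)
        refine hbu.subset ?_
        intro n hn
        exact Set.mem_biUnion (Set.mem_univ (w n)) ⟨hn, rfl⟩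
      exact hinf hfin
    obtain ⟨v, hv⟩ := hpig
    obtain ⟨m, hmF, hmv⟩ := hv.nonempty
    obtain ⟨n, hn, hmn⟩ := hv.exists_gt m
    refine ⟨v, hmv ▸ hmF, ?_, w (m + 1), ?_, ?_⟩
    · have := walk_reach hw 0 m (Nat.zero_le m)
      rwa [h0, hmv] at this
    · have := hw m; rwa [hmv] at this
    · have := walk_reach hw (m + 1) n (by omega)
      rwa [hn.2] at this
  · rintro ⟨v, hvF, hrv, u, hvu, huv⟩
    obtain ⟨k0, f0, hf00, hf0k, hf0step⟩ := exists_fun_of_reflTransGen hrv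
    obtain ⟨k1, f1, hf10, hf1k, hf1step⟩ := exists_fun_of_reflTransGen huv
    set L := k1 + 1 with hL
    have hLpos : 0 < L := by omega
    set cyc : ℕ → V := fun i => if i = 0 then v else f1 (i - 1) with hcyc
    have hcyc0 : cyc 0 = v := by simp [hcyc]
    have hcycL : cyc L = v := by
      show (if L = 0 then v else f1 (L - 1)) = v
      rw [if_neg (by omega)]
      simpa [hL] using hf1k
    have hcycstep : ∀ i < L, E (cyc i) (cyc (i + 1)) := by
      intro i hi
      rcases Nat.eq_zero_or_pos i with h | h
      · subst h
        show E (if 0 = 0 then v else _) (if 0 + 1 = 0 then v else f1 (0 + 1 - 1))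
        rw [if_pos rfl, if_neg (by omega)]
        simpa [hf10] using hvu
      · show E (if i = 0 then v else f1 (i - 1)) (if i + 1 = 0 then v else f1 (i + 1 - 1))
        rw [if_neg (by omega), if_neg (by omega)]
        have h1 : i - 1 + 1 = i := by omega
        have hs := hf1step (i - 1) (by omega)
        rw [h1] at hs
        simpa using hs
    set g : ℕ → V := fun n => cyc (n % L) with hg
    have hgstep : ∀ n, E (g n) (g (n + 1)) := by
      intro n
      have hdm := Nat.div_add_mod n L
      have hmlt : n % L < L := Nat.mod_lt n hLpos
      have key : n + 1 = (n % L + 1) + L * (n / L) := by omega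
      have hstep2 : (n + 1) % L = (n % L + 1) % L := by
        rw [key, Nat.add_mul_mod_self_left]
      show E (cyc (n % L)) (cyc ((n + 1) % L))
      rcases Nat.lt_or_ge (n % L + 1) L with h | h
      · have e : (n + 1) % L = n % L + 1 := by
          rw [hstep2]; exact Nat.mod_eq_of_lt h
        rw [e]
        exact hcycstep _ hmlt
      · have e : (n + 1) % L = 0 := by
          rw [hstep2, show n % L + 1 = L by omega, Nat.mod_self]
        have hlast := hcycstep (L - 1) (by omega)
        rw [show L - 1 + 1 = L by omega, hcycL] at hlast
        rw [e, hcyc0, show n % L = L - 1 by omega]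
        exact hlast
    set w : ℕ → V := fun n => if n < k0 then f0 n else g (n - k0) with hwdef
    have hg0 : g 0 = v := by
      show cyc (0 % L) = v
      rw [Nat.zero_mod, hcyc0]
    refine ⟨w, ?_, ?_, ?_⟩
    · show (if 0 < k0 then f0 0 else g (0 - k0)) = r
      rcases Nat.eq_zero_or_pos k0 with h | h
      · rw [if_neg (by omega)]
        have hrv' : r = v := by rw [← hf00, ← hf0k, h]
        simpa [hg0] using hrv'.symm
      · rw [if_pos h]; exact hf00
    · intro n
      show E (if n < k0 then f0 n else g (n - k0))
        (if n + 1 < k0 then f0 (n + 1) else g (n + 1 - k0))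
      rcases Nat.lt_or_ge (n + 1) k0 with h | h
      · rw [if_pos (show n < k0 by omega), if_pos h]
        exact hf0step n (by omega)
      · rw [if_neg (show ¬ n + 1 < k0 by omega)]
        rcases Nat.lt_or_ge n k0 with h2 | h2
        · rw [if_pos h2]
          have hn1 : n + 1 = k0 := by omega
          have h3 : n + 1 - k0 = 0 := by omega
          rw [h3, hg0, ← hf0k, ← hn1]
          exact hf0step n (by omega)
        · rw [if_neg (show ¬ n < k0 by omega)]
          have h3 : n + 1 - k0 = (n - k0) + 1 := by omega
          rw [h3]
          exact hgstep (n - k0)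
    · refine Set.infinite_of_injective_forall_mem
        (f := fun m : ℕ => k0 + m * L) ?_ ?_
      · intro a b hab
        simp only at hab
        have : a * L = b * L := by omega
        exact Nat.eq_of_mul_eq_mul_right hLpos this
      · intro m
        show (if k0 + m * L < k0 then f0 _ else g (k0 + m * L - k0)) ∈ F
        rw [if_neg (by omega)]
        have h3 : k0 + m * L - k0 = m * L := by omega
        rw [h3]
        show cyc (m * L % L) ∈ F
        rw [Nat.mul_mod_left, hcyc0]
        exact hvF
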